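/- Let k ≥ 1 be an integer with k ≢ 1 (mod 3) and let ε ∈ {1, −1}. Then there are infinitely many primes p such that the map PSL₂(𝔽_p) × PSL₂(𝔽_p) → PSL₂(𝔽_p) given by (x, y) ↦ x² · (x²·y·x^{2ε}·y⁻¹)^{k} is not surjective. -/

import Mathlib

open Matrix

namespace WordAux

variable {R : Type*} [CommRing R]

/-- Chebyshev-like sequence: `q 0 = 1`, `q 1 = t - 1`, `q (j+2) = t * q (j+1) - q j`. -/
def qs (t : R) : ℕ → R
  | 0 => 1
  | 1 => t - 1
  | (n+2) => t * qs t (n+1) - qs t n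

lemma qs_two : ∀ j, qs (2 : R) j = 1
  | 0 => rfl
  | 1 => by norm_num [qs]
  | (n+2) => by rw [qs, qs_two (n+1), qs_two n]; ring

lemma qs_neg_two : ∀ j, qs (-2 : R) j = (-1)^j * (2*j+1)
  | 0 => by norm_num [qs]
  | 1 => by norm_num [qs]
  | (n+2) => by
      rw [qs, qs_neg_two (n+1), qs_neg_two n]
      push_cast
      ring

/-- Cayley–Hamilton for `2×2` matrices of determinant one, entry-level version. -/
lemma ch' (a b c d : R) (h : a * d - b * c = 1) :
    !![a, b; c, d] * !![a, b; c, d] = (a + d) • !![a, b; c, d] - 1 := by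
  ext i j
  fin_cases i <;> fin_cases j <;>
    simp [Matrix.mul_apply, Fin.sum_univ_two, Matrix.one_apply] <;>
    (first | ring1 | linear_combination -h)

/-- Cayley–Hamilton for `2×2` matrices of determinant one. -/
lemma ch (M : Matrix (Fin 2) (Fin 2) R) (h : M.det = 1) :
    M * M = M.trace • M - 1 := by
  rw [det_fin_two] at h
  rw [eta_fin_two M, trace_fin_two_of]
  exact ch' _ _ _ _ h

lemma trace_word (A B : Matrix (Fin 2) (Fin 2) R) (hA : A.det = 1) (hB : B.det = 1)
    (hAB : A.trace = B.trace) :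
    ∀ j, (A * (A*B)^j).trace = A.trace * qs ((A*B).trace) j
  | 0 => by simp [qs]
  | 1 => by
      have h1 : A * (A*B)^1 = A.trace • (A*B) - B := by
        rw [pow_one, ← mul_assoc, ch A hA, sub_mul, smul_mul_assoc, one_mul]
      rw [h1, trace_sub, trace_smul, qs, ← hAB, smul_eq_mul]; ring
  | (j+2) => by
      have hZ : (A*B).det = 1 := by rw [det_mul, hA, hB, mul_one]
      have h2 : (A*B)^(j+2) = (A*B).trace • (A*B)^(j+1) - (A*B)^j := by
        calc (A*B)^(j+2) = (A*B)^j * ((A*B)*(A*B)) := by rw [pow_add, sq]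
        _ = (A*B)^j * ((A*B).trace • (A*B) - 1) := by rw [ch _ hZ]
        _ = (A*B).trace • ((A*B)^j * (A*B)) - (A*B)^j := by
            rw [mul_sub, mul_smul_comm, mul_one]
        _ = (A*B).trace • (A*B)^(j+1) - (A*B)^j := by rw [pow_succ]
      have h3 : A * (A*B)^(j+2)
          = (A*B).trace • (A * (A*B)^(j+1)) - A * (A*B)^j := by
        rw [h2, mul_sub, mul_smul_comm]
      rw [h3, trace_sub, trace_smul, trace_word A B hA hB hAB (j+1),
        trace_word A B hA hB hAB j, qs, smul_eq_mul]
      ring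

lemma qs_identity (Z V : Matrix (Fin 2) (Fin 2) R) (t : R)
    (h1 : Z * V = 1) (h2 : V * Z = 1) (h3 : Z + V = t • (1 : Matrix (Fin 2) (Fin 2) R)) :
    ∀ j, qs t j • (Z - V) = Z^(j+1) - V^(j+1) - Z^j + V^j := by
  have ht : t • Z = Z*Z + 1 := by
    have : (Z + V) * Z = t • (1 : Matrix (Fin 2) (Fin 2) R) * Z := by rw [h3]
    rw [add_mul, h2, smul_mul_assoc, one_mul] at this
    rw [this]
  have htV : t • V = V*V + 1 := by
    have : (Z + V) * V = t • (1 : Matrix (Fin 2) (Fin 2) R) * V := by rw [h3]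
    rw [add_mul, h1, smul_mul_assoc, one_mul] at this
    rw [← this]; abel
  have hZp : ∀ m, t • Z^(m+1) = Z^(m+2) + Z^m := by
    intro m
    calc t • Z^(m+1) = (t • Z) * Z^m := by rw [pow_succ', smul_mul_assoc]
    _ = Z*Z*Z^m + 1*Z^m := by rw [ht, add_mul]
    _ = Z^(m+2) + Z^m := by rw [one_mul, mul_assoc, ← pow_succ', ← pow_succ']
  have hVp : ∀ m, t • V^(m+1) = V^(m+2) + V^m := by
    intro m
    calc t • V^(m+1) = (t • V) * V^m := by rw [pow_succ', smul_mul_assoc]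
    _ = V*V*V^m + 1*V^m := by rw [htV, add_mul]
    _ = V^(m+2) + V^m := by rw [one_mul, mul_assoc, ← pow_succ', ← pow_succ']
  intro j
  induction j using Nat.twoStepInduction with
  | zero => simp [qs]
  | one =>
      rw [qs, sub_smul, one_smul, smul_sub, ht, htV, pow_one, pow_one, sq, sq]
      abel
  | more j ih1 ih2 =>
      rw [qs, sub_smul, mul_smul, ih2, ih1,
        smul_add, smul_sub, smul_sub, hZp (j+1), hVp (j+1), hZp j, hVp j]
      simp only [show (j+1)+2 = j+3 from rfl, show (j+2)+1 = j+3 from rfl,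
        show (j+1)+1 = j+2 from rfl]
      abel

section SL2Sec

variable {p : ℕ} [Fact p.Prime]

local notation "SL2" p => Matrix.SpecialLinearGroup (Fin 2) (ZMod p)
local notation "M2" p => Matrix (Fin 2) (Fin 2) (ZMod p)

/-- The adjugate (= inverse in `SL₂`) of a `2×2` matrix. -/
lemma adjugate_eq (M : M2 p) :
    M.adjugate = M.trace • (1 : M2 p) - M := by
  rw [eta_fin_two M, adjugate_fin_two, trace_fin_two_of]
  ext i j
  fin_cases i <;> fin_cases j <;>
    simp [Matrix.one_apply] <;> ring

lemma trace_coe_inv (C : SL2 p) :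
    Matrix.trace (↑(C⁻¹) : M2 p) = Matrix.trace (↑C : M2 p) := by
  rw [Matrix.SpecialLinearGroup.coe_inv, adjugate_eq, trace_sub, trace_smul, trace_one,
    smul_eq_mul, Fintype.card_fin]
  push_cast
  ring

lemma det_sub_one (M : M2 p) (h : M.det = 1) :
    (M - 1).det = 2 - M.trace := by
  rw [det_fin_two] at h
  rw [det_fin_two, trace_fin_two]
  simp [Matrix.sub_apply, Matrix.one_apply]
  linear_combination h

/-- If `ζ ∈ SL₂(𝔽ₚ)` satisfies `ζ^(2k+1) = -1` (as a matrix) and `2k+1` is coprime to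
`|GL₂(𝔽ₚ)|`, then `ζ² = 1` as a matrix. -/
lemma sq_eq_one_of_pow_eq_neg_one {k : ℕ}
    (hcop : Nat.Coprime (2*k+1) (Nat.card (GL (Fin 2) (ZMod p))))
    (ζ : SL2 p) (hZm : (↑ζ : M2 p)^(2*k+1) = -1) :
    (↑ζ : M2 p)^2 = 1 := by
  have hζ2m : ζ^(2*(2*k+1)) = 1 := by
    apply Subtype.ext
    rw [Matrix.SpecialLinearGroup.coe_pow, Matrix.SpecialLinearGroup.coe_one,
      mul_comm 2 (2*k+1), pow_mul, hZm]
    simp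
  have hu2m : (Matrix.SpecialLinearGroup.toGL ζ)^(2*(2*k+1)) = 1 := by
    rw [← map_pow, hζ2m, _root_.map_one]
  have hdvd1 : orderOf (Matrix.SpecialLinearGroup.toGL ζ) ∣ 2*(2*k+1) :=
    orderOf_dvd_of_pow_eq_one hu2m
  have hdvd2 : orderOf (Matrix.SpecialLinearGroup.toGL ζ) ∣ Nat.card (GL (Fin 2) (ZMod p)) :=
    orderOf_dvd_natCard _
  have hco : Nat.Coprime (orderOf (Matrix.SpecialLinearGroup.toGL ζ)) (2*k+1) :=
    (Nat.Coprime.coprime_dvd_right hdvd2 hcop).symm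
  have hdvd3 : orderOf (Matrix.SpecialLinearGroup.toGL ζ) ∣ 2 :=
    hco.dvd_of_dvd_mul_right hdvd1
  have hu2 : (Matrix.SpecialLinearGroup.toGL ζ)^2 = 1 := orderOf_dvd_iff_pow_eq_one.mp hdvd3
  have := congrArg (Units.val) hu2
  rw [Units.val_pow_eq_pow_val, Units.val_one] at this
  exact this

/-- Core argument: `qs τ k` is nonzero for `τ` the trace of an `SL₂` element. -/
lemma qs_trace_ne_zero {k : ℕ}
    (hm : ((2*k+1 : ℕ) : ZMod p) ≠ 0)
    (hcop : Nat.Coprime (2*k+1) (Nat.card (GL (Fin 2) (ZMod p))))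
    (ζ : SL2 p) :
    qs (Matrix.trace (↑ζ : M2 p)) k ≠ 0 := by
  intro hq
  by_cases hτ2 : Matrix.trace (↑ζ : M2 p) = 2
  · rw [hτ2, qs_two] at hq
    exact one_ne_zero hq
  have hZdet : (↑ζ : M2 p).det = 1 := Matrix.SpecialLinearGroup.det_coe ζ
  have hchZ := ch (↑ζ : M2 p) hZdet
  -- abbreviations (as plain terms)
  have h1 : (↑ζ : M2 p) * (Matrix.trace (↑ζ : M2 p) • (1 : M2 p) - ↑ζ) = 1 := by
    rw [mul_sub, mul_smul_comm, mul_one, hchZ]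
    abel
  have h2' : (Matrix.trace (↑ζ : M2 p) • (1 : M2 p) - ↑ζ) * (↑ζ : M2 p) = 1 := by
    rw [sub_mul, smul_mul_assoc, one_mul, hchZ]
    abel
  have h3 : (↑ζ : M2 p) + (Matrix.trace (↑ζ : M2 p) • (1 : M2 p) - ↑ζ)
      = Matrix.trace (↑ζ : M2 p) • (1 : M2 p) := by abel
  have hid := qs_identity (↑ζ : M2 p) (Matrix.trace (↑ζ : M2 p) • (1 : M2 p) - ↑ζ)
    (Matrix.trace (↑ζ : M2 p)) h1 h2' h3 k
  rw [hq, zero_smul] at hid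
  have hcomm : Commute (↑ζ : M2 p) (Matrix.trace (↑ζ : M2 p) • (1 : M2 p) - ↑ζ) :=
    ((Commute.one_right _).smul_right _).sub_right (Commute.refl _)
  have hpow : ∀ j, (↑ζ : M2 p)^j * (Matrix.trace (↑ζ : M2 p) • (1 : M2 p) - ↑ζ)^j = 1 := fun j => by
    rw [← hcomm.mul_pow, h1, one_pow]
  have e := congrArg (fun m => (↑ζ : M2 p)^(k+1) * m) hid
  simp only [mul_zero] at e
  have e2 : (↑ζ : M2 p)^(k+1) * (Matrix.trace (↑ζ : M2 p) • (1 : M2 p) - ↑ζ)^k = ↑ζ := by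
    rw [pow_succ', mul_assoc, hpow k, mul_one]
  have e3 : (↑ζ : M2 p)^(k+1) * (↑ζ : M2 p)^k = (↑ζ : M2 p)^(2*k+1) := by
    rw [← pow_add]
    ring_nf
  rw [mul_add, mul_sub, mul_sub, ← pow_add, hpow (k+1), e2, e3,
    show k+1+(k+1) = 2*k+2 by ring] at e
  -- e : 0 = ζ^(2k+2) - 1 - ζ^(2k+1) + ζ
  have expand : ((↑ζ : M2 p)^(2*k+1) + 1) * ((↑ζ : M2 p) - 1)
      = (↑ζ : M2 p)^(2*k+2) - (↑ζ : M2 p)^(2*k+1) + (↑ζ : M2 p) - 1 := by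
    rw [add_mul, mul_sub, mul_sub, ← pow_succ,
      show 2*k+1+1 = 2*k+2 from rfl]
    simp only [one_mul, mul_one]
    abel
  have efact : ((↑ζ : M2 p)^(2*k+1) + 1) * ((↑ζ : M2 p) - 1) = 0 := by
    rw [expand]
    calc (↑ζ : M2 p)^(2*k+2) - (↑ζ : M2 p)^(2*k+1) + (↑ζ : M2 p) - 1
        = (↑ζ : M2 p)^(2*k+2) - 1 - (↑ζ : M2 p)^(2*k+1) + (↑ζ : M2 p) := by abel
      _ = 0 := e.symm
  have hunit : IsUnit ((↑ζ : M2 p) - 1) := by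
    rw [Matrix.isUnit_iff_isUnit_det, det_sub_one _ hZdet, isUnit_iff_ne_zero]
    intro hcon
    exact hτ2 (by linear_combination -hcon)
  have hZm : (↑ζ : M2 p)^(2*k+1) = -1 := by
    have hc := hunit.mul_right_cancel
      (by rw [efact, zero_mul] :
        ((↑ζ : M2 p)^(2*k+1) + 1) * ((↑ζ : M2 p) - 1) = 0 * ((↑ζ : M2 p) - 1))
    exact eq_neg_of_add_eq_zero_left hc
  have hZ2 : (↑ζ : M2 p)^2 = 1 := sq_eq_one_of_pow_eq_neg_one hcop ζ hZm
  have hZeq : (↑ζ : M2 p) = -1 := by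
    rw [pow_succ, pow_mul, hZ2, one_pow, one_mul] at hZm
    exact hZm
  have hτneg : Matrix.trace (↑ζ : M2 p) = -2 := by
    rw [hZeq, trace_neg, trace_one]
    norm_num
  rw [hτneg, qs_neg_two] at hq
  rcases mul_eq_zero.mp hq with hc | hc
  · exact pow_ne_zero k (neg_ne_zero.mpr one_ne_zero) hc
  · apply hm
    push_cast
    linear_combination hc

/-- The word value `A * (A*B)^k` cannot have trace zero when `tr A = tr B ≠ 0`. -/
lemma trace_word_value_ne_zero {k : ℕ}
    (hm : ((2*k+1 : ℕ) : ZMod p) ≠ 0)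
    (hcop : Nat.Coprime (2*k+1) (Nat.card (GL (Fin 2) (ZMod p))))
    (A Bq : SL2 p)
    (htB : Matrix.trace (↑Bq : M2 p) = Matrix.trace (↑A : M2 p))
    (hσ : Matrix.trace (↑A : M2 p) ≠ 0) :
    Matrix.trace (↑(A * (A * Bq)^k) : M2 p) ≠ 0 := by
  intro h0
  have hco : (↑(A * (A * Bq)^k) : M2 p)
      = (↑A : M2 p) * ((↑A : M2 p) * (↑Bq : M2 p))^k := by
    simp only [Matrix.SpecialLinearGroup.coe_mul, Matrix.SpecialLinearGroup.coe_pow]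
  rw [hco, trace_word _ _ (Matrix.SpecialLinearGroup.det_coe A)
    (Matrix.SpecialLinearGroup.det_coe Bq) htB.symm k] at h0
  rcases mul_eq_zero.mp h0 with h | hq
  · exact hσ h
  · have : ((↑A : M2 p) * (↑Bq : M2 p)) = (↑(A * Bq) : M2 p) :=
      (Matrix.SpecialLinearGroup.coe_mul A Bq).symm
    rw [this] at hq
    exact qs_trace_ne_zero hm hcop (A * Bq) hq

end SL2Sec

end WordAux

section PerPrime

open Matrix

/-- Non-surjectivity of the word map for a fixed prime satisfying the congruence conditions. -/
lemma not_surjective_word_map (p k : ℕ) [Fact p.Prime] (ε : ℤ) (hε : ε = 1 ∨ ε = -1)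
    (hp8 : p % 8 = 3) (hpm : p % (2*k+1) = 2) (h3m : ¬ 3 ∣ (2*k+1)) (hk2 : 2 ≤ k) :
    ¬ Function.Surjective
        (fun g : Matrix.ProjectiveSpecialLinearGroup (Fin 2) (ZMod p) ×
            Matrix.ProjectiveSpecialLinearGroup (Fin 2) (ZMod p) =>
          g.1 ^ 2 * (g.1 ^ 2 * g.2 * g.1 ^ (2 * ε) * g.2⁻¹) ^ k) := by
  have hp3 : 3 ≤ p := by
    rcases Nat.lt_or_ge p 3 with h | h
    · interval_cases p <;> simp_all
    · exact h
  have hp2 : p ≠ 2 := by omega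
  -- number-theoretic consequences
  obtain ⟨c, hc⟩ : ∃ c, p = (2*k+1) * c + 2 := ⟨p / (2*k+1), by have h := Nat.div_add_mod p (2*k+1); rw [hpm] at h; exact h.symm⟩
  have cop2 : Nat.Coprime (2*k+1) 2 := Nat.coprime_comm.mp ((Nat.prime_two.coprime_iff_not_dvd).mpr (by omega))
  have cop3 : Nat.Coprime (2*k+1) 3 := Nat.coprime_comm.mp ((Nat.prime_three.coprime_iff_not_dvd).mpr h3m)
  have copp : Nat.Coprime (2*k+1) p := by
    have h := (Nat.coprime_add_mul_left_right (2*k+1) 2 c).mpr cop2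
    rw [Nat.add_comm 2 ((2*k+1)*c)] at h
    rw [hc]
    exact h
  have copp1 : Nat.Coprime (2*k+1) (p - 1) := by
    have e : p - 1 = (2*k+1) * c + 1 := by
      rw [hc, show (2*k+1)*c+2 = ((2*k+1)*c+1)+1 from rfl, Nat.add_sub_cancel]
    have h := (Nat.coprime_add_mul_left_right (2*k+1) 1 c).mpr (Nat.coprime_one_right _)
    rw [Nat.add_comm 1 ((2*k+1)*c)] at h
    rw [e]
    exact h
  have copp3 : Nat.Coprime (2*k+1) (p + 1) := by
    have e : p + 1 = (2*k+1) * c + 3 := by rw [hc]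
    have h := (Nat.coprime_add_mul_left_right (2*k+1) 3 c).mpr cop3
    rw [Nat.add_comm 3 ((2*k+1)*c)] at h
    rw [e]
    exact h
  obtain ⟨r, hr⟩ : ∃ r, p = r + 1 := ⟨p - 1, by omega⟩
  have e1 : p^2 - 1 = (p - 1) * (p + 1) := by
    rw [hr]
    have h' : (r+1)^2 = r*(r+2)+1 := by ring
    rw [h', Nat.add_sub_cancel, Nat.add_sub_cancel]
  have e2 : p^2 - p = p * (p - 1) := by
    rw [hr]
    have h' : (r+1)^2 = (r+1)*r+(r+1) := by ring
    rw [h', Nat.add_sub_cancel, Nat.add_sub_cancel]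
  have hcard : Nat.card (GL (Fin 2) (ZMod p)) = (p^2 - 1) * (p^2 - p) := by
    rw [Matrix.card_GL_field, Fin.prod_univ_two, ZMod.card]
    norm_num
  have hcop : Nat.Coprime (2*k+1) (Nat.card (GL (Fin 2) (ZMod p))) := by
    rw [hcard, e1, e2]
    exact (copp1.mul_right copp3).mul_right (copp.mul_right copp1)
  have hm : ((2*k+1 : ℕ) : ZMod p) ≠ 0 := by
    intro h
    have hdvd := (ZMod.natCast_eq_zero_iff (2*k+1) p).mp h
    have : p ∣ 1 := copp ▸ Nat.dvd_gcd hdvd dvd_rfl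
    have := Nat.le_of_dvd one_pos this
    omega
  have hsq2 : ¬ IsSquare (2 : ZMod p) := by
    intro h
    rcases (ZMod.exists_sq_eq_two_iff hp2).mp h with h' | h' <;> omega
  -- the actual group theory
  intro hsurj
  set Mmat : Matrix.SpecialLinearGroup (Fin 2) (ZMod p) :=
    ⟨!![0, 1; -1, 0], by norm_num [Matrix.det_fin_two_of]⟩ with hMmat
  obtain ⟨g, hg⟩ := hsurj (QuotientGroup.mk Mmat)
  obtain ⟨X, hX⟩ := QuotientGroup.mk_surjective g.1
  obtain ⟨Y, hY⟩ := QuotientGroup.mk_surjective g.2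
  simp only at hg
  rw [← hX, ← hY] at hg
  have hg' : QuotientGroup.mk (s := Subgroup.center (Matrix.SpecialLinearGroup (Fin 2) (ZMod p)))
      (X^2 * (X^2 * Y * X^(2*ε) * Y⁻¹)^k) = QuotientGroup.mk Mmat := by
    rw [← hg]
    simp only [QuotientGroup.mk_mul, QuotientGroup.mk_pow, QuotientGroup.mk_zpow,
      QuotientGroup.mk_inv]
  have hcen := QuotientGroup.eq.mp hg'
  obtain ⟨rr, hr2, hrs⟩ := Matrix.SpecialLinearGroup.mem_center_iff.mp hcen
  rw [Fintype.card_fin] at hr2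
  set W : Matrix.SpecialLinearGroup (Fin 2) (ZMod p) := X^2 * (X^2 * Y * X^(2*ε) * Y⁻¹)^k with hW
  have hWM : (↑W : Matrix (Fin 2) (Fin 2) (ZMod p)) * (↑(W⁻¹ * Mmat) : Matrix (Fin 2) (Fin 2) (ZMod p)) = (↑Mmat : Matrix (Fin 2) (Fin 2) (ZMod p)) := by
    rw [← Matrix.SpecialLinearGroup.coe_mul, mul_inv_cancel_left]
  rw [← hrs] at hWM
  have hscal : (Matrix.scalar (Fin 2)) rr = rr • (1 : Matrix (Fin 2) (Fin 2) (ZMod p)) := by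
    rw [Matrix.scalar_apply, ← Matrix.smul_one_eq_diagonal]
  have htr0 : rr * Matrix.trace (↑W : Matrix (Fin 2) (Fin 2) (ZMod p)) = 0 := by
    have := congrArg Matrix.trace hWM
    rw [hscal, mul_smul_comm, mul_one, Matrix.trace_smul, smul_eq_mul] at this
    rw [this, hMmat]
    simp [Matrix.trace_fin_two]
  have htrW : Matrix.trace (↑W : Matrix (Fin 2) (Fin 2) (ZMod p)) = 0 := by
    calc Matrix.trace (↑W : Matrix (Fin 2) (Fin 2) (ZMod p))
        = rr^2 * Matrix.trace (↑W : Matrix (Fin 2) (Fin 2) (ZMod p)) := by rw [hr2, one_mul]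
      _ = rr * (rr * Matrix.trace (↑W : Matrix (Fin 2) (Fin 2) (ZMod p))) := by ring
      _ = 0 := by rw [htr0, mul_zero]
  -- now the trace lemma
  have hWrd : W = (X^2) * ((X^2) * (Y * X^(2*ε) * Y⁻¹))^k := by rw [hW]; group
  have htXe : Matrix.trace (↑(X^(2*ε)) : Matrix (Fin 2) (Fin 2) (ZMod p))
      = Matrix.trace (↑(X^2) : Matrix (Fin 2) (Fin 2) (ZMod p)) := by
    rcases hε with h | h
    · rw [h]
      norm_num
    · rw [h, show ((2:ℤ)*(-1) = -((2:ℕ):ℤ)) by norm_num, _root_.zpow_neg, zpow_natCast]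
      exact WordAux.trace_coe_inv (X^2)
  have htB : Matrix.trace (↑(Y * X^(2*ε) * Y⁻¹) : Matrix (Fin 2) (Fin 2) (ZMod p))
      = Matrix.trace (↑(X^2) : Matrix (Fin 2) (Fin 2) (ZMod p)) := by
    rw [Matrix.SpecialLinearGroup.coe_mul, Matrix.SpecialLinearGroup.coe_mul,
      Matrix.trace_mul_cycle, ← Matrix.SpecialLinearGroup.coe_mul, inv_mul_cancel,
      Matrix.SpecialLinearGroup.coe_one, one_mul]
    exact htXe
  have hσ : Matrix.trace (↑(X^2) : Matrix (Fin 2) (Fin 2) (ZMod p)) ≠ 0 := by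
    intro h0
    have hchX := WordAux.ch (↑X : Matrix (Fin 2) (Fin 2) (ZMod p))
      (Matrix.SpecialLinearGroup.det_coe X)
    have htr2 : Matrix.trace (↑(X^2) : Matrix (Fin 2) (Fin 2) (ZMod p))
        = Matrix.trace (↑X : Matrix (Fin 2) (Fin 2) (ZMod p))
          * Matrix.trace (↑X : Matrix (Fin 2) (Fin 2) (ZMod p)) - 2 := by
      rw [Matrix.SpecialLinearGroup.coe_pow, sq, hchX, trace_sub, trace_smul, trace_one,
        smul_eq_mul, Fintype.card_fin]
      push_cast
      ring
    apply hsq2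
    refine ⟨Matrix.trace (↑X : Matrix (Fin 2) (Fin 2) (ZMod p)), ?_⟩
    rw [htr2] at h0
    linear_combination -h0
  have := WordAux.trace_word_value_ne_zero hm hcop (X^2) (Y * X^(2*ε) * Y⁻¹) htB hσ
  rw [← hWrd] at this
  exact this htrW

end PerPrime

/-- Corollary of Theorem 3.1 and Proposition 3.2: for `k ≥ 1` with `k ≢ 1 (mod 3)` and
`ε = ±1`, there are infinitely many primes `p` such that the word map
`(x, y) ↦ x²·(x²·y·x^{2ε}·y⁻¹)^k` is not surjective on `PSL₂(𝔽_p)`. -/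
theorem infinitely_many_primes_nonsurjective_word_map
    (k : ℕ) (hk : 1 ≤ k) (hk3 : ¬ (k % 3 = 1)) (ε : ℤ) (hε : ε = 1 ∨ ε = -1) :
    {p : ℕ | p.Prime ∧
      ¬ Function.Surjective
        (fun g : Matrix.ProjectiveSpecialLinearGroup (Fin 2) (ZMod p) ×
            Matrix.ProjectiveSpecialLinearGroup (Fin 2) (ZMod p) =>
          g.1 ^ 2 * (g.1 ^ 2 * g.2 * g.1 ^ (2 * ε) * g.2⁻¹) ^ k)}.Infinite := by
  have hk2 : 2 ≤ k := by omega
  have h3m : ¬ 3 ∣ (2*k+1) := by omega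
  have hm5 : 5 ≤ 2*k+1 := by omega
  have cop2m : Nat.Coprime 2 (2*k+1) := (Nat.prime_two.coprime_iff_not_dvd).mpr (by omega)
  have cop8m : Nat.Coprime 8 (2*k+1) := by
    have := Nat.Coprime.pow_left 3 cop2m
    norm_num at this
    exact this
  obtain ⟨a, ha8, ham⟩ := Nat.chineseRemainder cop8m 3 2
  have ha8' : a % 8 = 3 := by
    have := ha8
    unfold Nat.ModEq at this
    omega
  have ham' : a % (2*k+1) = 2 := by
    have := ham
    unfold Nat.ModEq at this
    rw [Nat.mod_eq_of_lt (show 2 < 2*k+1 by omega)] at this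
    exact this
  haveI : NeZero (8*(2*k+1)) := ⟨by positivity⟩
  have hunit : IsUnit ((a : ZMod (8*(2*k+1)))) := by
    rw [ZMod.isUnit_iff_coprime]
    have copa8 : Nat.Coprime a 8 := by
      obtain ⟨c, hc⟩ : ∃ c, a = 8*c + 3 := ⟨a/8, by have h := Nat.div_add_mod a 8; rw [ha8'] at h; omega⟩
      rw [hc]
      have h := (Nat.coprime_add_mul_left_right 8 3 c).mpr (by norm_num)
      rw [Nat.add_comm 3 (8*c)] at h
      exact h.symm
    have copam : Nat.Coprime a (2*k+1) := by
      obtain ⟨c, hc⟩ : ∃ c, a = (2*k+1)*c + 2 :=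
        ⟨a/(2*k+1), by have h := Nat.div_add_mod a (2*k+1); rw [ham'] at h; omega⟩
      rw [hc]
      have h := (Nat.coprime_add_mul_left_right (2*k+1) 2 c).mpr cop2m.symm
      rw [Nat.add_comm 2 ((2*k+1)*c)] at h
      exact h.symm
    exact copa8.mul_right copam
  have hinf := Nat.infinite_setOfPred_prime_and_eq_mod hunit
  apply hinf.mono
  rintro p ⟨hp, hpa⟩
  haveI : Fact p.Prime := ⟨hp⟩
  refine ⟨hp, ?_⟩
  have hmod : p ≡ a [MOD 8*(2*k+1)] := by
    rwa [ZMod.natCast_eq_natCast_iff] at hpa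
  have hmod8 : p % 8 = 3 := by
    have h8 := (hmod.of_dvd (dvd_mul_right 8 (2*k+1)))
    unfold Nat.ModEq at h8
    omega
  have hmodm : p % (2*k+1) = 2 := by
    have hm' := (hmod.of_dvd (dvd_mul_left (2*k+1) 8))
    unfold Nat.ModEq at hm'
    omega
  exact not_surjective_word_map p k ε hε hmod8 hmodm h3m hk2
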